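/- Let ℓ₁, …, ℓ_k : ℝⁿ → ℝ (k ≥ 1) be affine functions on EuclideanSpace ℝ (Fin n). Define for each x the sequence z₀(x) = 0 and z_i(x) = max(0, z_{i-1}(x) + ℓ_i(x) - ℓ_{i+1}(x)) for 1 ≤ i ≤ k-1. Then for every x, z_{k-1}(x) + ℓ_k(x) = max_{1 ≤ i ≤ k} ℓᵢ(x). In particular, the maximum of k affine functions is computed exactly by a ReLU network with k layers of one neuron each, where the weight multiplying the previous layer's output is the nonnegative number 1. -/

import Mathlib

/-- The ICNN recursion with one ReLU neuron per layer:
`z₀(x) = 0` and `z_i(x) = max (0) (z_{i-1}(x) + ℓ_i(x) - ℓ_{i+1}(x))` for `i ≥ 1`. -/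
noncomputable def icnnMaxSeq (n : ℕ) (ℓ : ℕ → EuclideanSpace ℝ (Fin n) →ᵃ[ℝ] ℝ) :
    ℕ → EuclideanSpace ℝ (Fin n) → ℝ
  | 0 => fun _ => 0
  | (i + 1) => fun x => max 0 (icnnMaxSeq n ℓ i x + ℓ (i + 1) x - ℓ (i + 2) x)

theorem icnn_computes_max_of_affine
    (n k : ℕ) (hk : 1 ≤ k)
    (ℓ : ℕ → EuclideanSpace ℝ (Fin n) →ᵃ[ℝ] ℝ)
    (x : EuclideanSpace ℝ (Fin n)) :
    icnnMaxSeq n ℓ (k - 1) x + ℓ k x =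
      (Finset.Icc 1 k).sup' (Finset.nonempty_Icc.mpr hk) (fun i => ℓ i x) := by
  induction k with
  | zero => omega
  | succ k ih =>
    rcases Nat.lt_or_ge k 1 with h1 | h1
    · interval_cases k; simp [icnnMaxSeq]
    · have hk' : 1 ≤ k := by omega
      have hins : Finset.Icc 1 (k + 1) = insert (k + 1) (Finset.Icc 1 k) := by
        ext j; simp [Nat.lt_succ_iff]; omega
      have hsup : (Finset.Icc 1 (k + 1)).sup' (Finset.nonempty_Icc.mpr hk)
          (fun i => ℓ i x) = max (ℓ (k + 1) x)
            ((Finset.Icc 1 k).sup' (Finset.nonempty_Icc.mpr hk') (fun i => ℓ i x)) := by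
        rw [Finset.sup'_congr _ hins (fun _ _ => rfl)]; exact Finset.sup'_insert _ _
      rw [hsup, ← ih hk']
      have hk1 : k + 1 - 1 = (k - 1) + 1 := by omega
      rw [hk1]
      show max 0 (icnnMaxSeq n ℓ (k-1) x + ℓ (k - 1 + 1) x - ℓ (k - 1 + 2) x) + ℓ (k+1) x = _
      have h2 : k - 1 + 1 = k := by omega
      have h3 : k - 1 + 2 = k + 1 := by omega
      rw [h2, h3]
      rcases le_total 0 (icnnMaxSeq n ℓ (k-1) x + ℓ k x - ℓ (k+1) x) with h | h
      · rw [max_eq_right h, max_eq_right (by linarith)]; ring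
      · rw [max_eq_left h, max_eq_left (by linarith)]; ring
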